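/- The map X ↦ L_X from subsets of ℤ to subsets of ℤ×ℤ, defined by L_X = {a + k₁·(9,0) + k₂·(0,4) + 1_X(k₁)·(0,1) : a ∈ L₀, (k₁,k₂) ∈ ℤ²} with L₀ = {(0,0),(0,3),(2,2),(3,1),(4,3),(5,0),(7,1),(7,2)} and 1_X the indicator function of X, is injective. Consequently there exist uncountably many distinct sets of the form L_X. -/

import Mathlib

/-- The king grid on `ℤ × ℤ`: distinct vertices are adjacent iff both
coordinates differ by at most 1 (equivalently, Euclidean distance ≤ √2). -/
def kingGrid : SimpleGraph (ℤ × ℤ) where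
  Adj u v := u ≠ v ∧ |u.1 - v.1| ≤ 1 ∧ |u.2 - v.2| ≤ 1
  symm := ⟨by
    rintro u v ⟨h, h1, h2⟩
    refine ⟨h.symm, ?_, ?_⟩ <;> rw [abs_sub_comm] <;> assumption⟩
  loopless := ⟨fun v h => h.1 rfl⟩

/-- Open neighborhood in the king grid. -/
def N (v : ℤ × ℤ) : Set (ℤ × ℤ) := kingGrid.neighborSet v

/-- Closed neighborhood in the king grid. -/
def Ncl (v : ℤ × ℤ) : Set (ℤ × ℤ) := insert v (kingGrid.neighborSet v)

/-- `S` is a dominating set of the king grid. -/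
def IsDominating (S : Set (ℤ × ℤ)) : Prop := ∀ u : ℤ × ℤ, (Ncl u ∩ S).Nonempty

/-- `S` is locating: distinct vertices outside `S` have distinct neighborhoods in `S`. -/
def IsLocating (S : Set (ℤ × ℤ)) : Prop :=
  ∀ u v : ℤ × ℤ, u ∉ S → v ∉ S → u ≠ v → N u ∩ S ≠ N v ∩ S

/-- `m` is the partner map of a perfect matching of the induced subgraph on `S`. -/
def IsPartnerMap (S : Set (ℤ × ℤ)) (m : ℤ × ℤ → ℤ × ℤ) : Prop :=
  ∀ v ∈ S, m v ∈ S ∧ kingGrid.Adj v (m v) ∧ m (m v) = v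

/-- `S` is a locating-paired-dominating set with matching partner map `m`. -/
def IsLPDS (S : Set (ℤ × ℤ)) (m : ℤ × ℤ → ℤ × ℤ) : Prop :=
  IsDominating S ∧ IsLocating S ∧ IsPartnerMap S m

/-- Pendant neighbors of `v` (relative to the partner map `m`). -/
def P (m : ℤ × ℤ → ℤ × ℤ) (v : ℤ × ℤ) : Set (ℤ × ℤ) := N v \ Ncl (m v)

/-- Interval neighbors of `v` (relative to the partner map `m`). -/
def I (m : ℤ × ℤ → ℤ × ℤ) (v : ℤ × ℤ) : Set (ℤ × ℤ) := N v ∩ N (m v)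

def L0 : Set (ℤ × ℤ) :=
  {(0,0), (0,3), (2,2), (3,1), (4,3), (5,0), (7,1), (7,2)}

def LX (X : Set ℤ) : Set (ℤ × ℤ) :=
  {p | ∃ a ∈ L0, ∃ k1 k2 : ℤ,
    p = a + k1 • ((9:ℤ), (0:ℤ)) + k2 • ((0:ℤ), (4:ℤ))
        + X.indicator (fun _ => ((0:ℤ), (1:ℤ))) k1}


open scoped Classical in
lemma mem_LX_iff (X : Set ℤ) (k : ℤ) : ((2+9*k, 3) : ℤ×ℤ) ∈ LX X ↔ k ∈ X := by
  constructor
  · rintro ⟨a, ha, k1, k2, hp⟩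
    rw [Set.indicator_apply] at hp
    by_cases h1 : k1 ∈ X
    · simp only [if_pos h1] at hp
      simp only [L0, Set.mem_insert_iff, Set.mem_singleton_iff] at ha
      have hk : k1 = k := by
        rcases ha with rfl|rfl|rfl|rfl|rfl|rfl|rfl|rfl <;>
          simp [Prod.ext_iff, Prod.smul_mk, smul_eq_mul] at hp <;> omega
      rwa [hk] at h1
    · exfalso
      simp only [if_neg h1] at hp
      simp only [L0, Set.mem_insert_iff, Set.mem_singleton_iff] at ha
      rcases ha with rfl|rfl|rfl|rfl|rfl|rfl|rfl|rfl <;>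
        simp [Prod.ext_iff, Prod.smul_mk, smul_eq_mul] at hp <;> omega
  · intro hk
    refine ⟨(2,2), by simp [L0], k, 0, ?_⟩
    rw [Set.indicator_apply, if_pos hk]
    simp only [Prod.ext_iff, Prod.fst_add, Prod.snd_add, Prod.smul_mk, smul_eq_mul]
    constructor <;> ring

theorem LX_injective :
    Function.Injective LX ∧ ¬ (Set.range LX).Countable := by
  have hinj : Function.Injective LX := by
    intro X Y h
    ext k
    rw [← mem_LX_iff X k, ← mem_LX_iff Y k, h]
  refine ⟨hinj, fun hc => ?_⟩
  have hco : Countable (Set ℤ) := by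
    have := hc.to_subtype
    exact Countable.of_equiv _ (Equiv.ofInjective LX hinj).symm
  obtain ⟨f, hf⟩ := countable_iff_exists_injective (Set ℤ) |>.mp hco
  exact Function.cantor_injective (fun s => (f s : ℤ))
    (Function.Injective.comp (fun a b h => Int.ofNat.inj h) hf)
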